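/- Let p > 0, μ > 0, f, g, h, k be reals with f² + g² < 1, and let λ_p, λ_f, λ_g, λ_h, λ_k, λ_L, λ_m, m > 0, c > 0 be reals. Then there exists a real polynomial P of degree at most 6 (the switching polynomial) such that: (i) for every L ∈ (−π, π), G(L) = 0 if and only if P(tan(L/2)) = 0; (ii) P is the zero polynomial only if G vanishes identically on (−π, π); and (iii) if moreover λ_m ≤ 1, then for every L ∈ (−π, π), S(L) = 0 if and only if P(tan(L/2)) = 0. -/

import Mathlib

set_option linter.unusedVariables false


noncomputable def wfun (f g L : ℝ) : ℝ := 1 + f * Real.cos L + g * Real.sin L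

noncomputable def Rfun (p μ lf lg L : ℝ) : ℝ :=
  Real.sqrt (p / μ) * (lf * Real.sin L - lg * Real.cos L)

noncomputable def Tfun (p μ f g lp lf lg L : ℝ) : ℝ :=
  Real.sqrt (p / μ) * (1 / wfun f g L) *
    (2 * p * lp + lf * ((wfun f g L + 1) * Real.cos L + f)
      + lg * ((wfun f g L + 1) * Real.sin L + g))

noncomputable def Nfun (p μ f g h k lf lg lh lk lL L : ℝ) : ℝ :=
  Real.sqrt (p / μ) * (1 / wfun f g L) *
    ((lL + f * lg - g * lf) * (h * Real.sin L - k * Real.cos L)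
      + ((1 + h ^ 2 + k ^ 2) / 2) * (lh * Real.cos L + lk * Real.sin L))

noncomputable def Gfun (p μ f g h k lp lf lg lh lk lL lm m c L : ℝ) : ℝ :=
  c ^ 2 * (Rfun p μ lf lg L ^ 2 + Tfun p μ f g lp lf lg L ^ 2
    + Nfun p μ f g h k lf lg lh lk lL L ^ 2) - m ^ 2 * (1 - lm) ^ 2

noncomputable def Sfun (p μ f g h k lp lf lg lh lk lL lm m c L : ℝ) : ℝ :=
  1 - lm - (c / m) * Real.sqrt (Rfun p μ lf lg L ^ 2 + Tfun p μ f g lp lf lg L ^ 2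
    + Nfun p μ f g h k lf lg lh lk lL L ^ 2)

noncomputable def esw0 (f g h k p lp lf lg lh lk lL : ℝ) : ℝ :=
  (1/4)*lh^2 + lg^2 + 4*lf^2 + 8*p*lp*lf + 4*p^2*lp^2 - k*lh*lL + k^2*lL^2 + (1/2)*k^2*lh^2 - k^3*lh*lL + (1/4)*k^4*lh^2 + (1/2)*h^2*lh^2 - h^2*k*lh*lL + (1/2)*h^2*k^2*lh^2 + (1/4)*h^4*lh^2 + 4*g*lf*lg + 4*g*p*lp*lg + g*k*lf*lh - 2*g*k^2*lf*lL + g*k^3*lf*lh + g*h^2*k*lf*lh + g^2*lg^2 + g^2*k^2*lf^2 + 2*f*lg^2 + 8*f*lf^2 + 8*f*p*lp*lf - f*k*lg*lh + 2*f*k^2*lg*lL - f*k^3*lg*lh - f*h^2*k*lg*lh + 4*f*g*lf*lg - 2*f*g*k^2*lf*lg + f^2*lg^2 + 4*f^2*lf^2 + f^2*k^2*lg^2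

noncomputable def dsw0 (f g : ℝ) : ℝ :=
  1 + 2*f + f^2

noncomputable def esw1 (f g h k p lp lf lg lh lk lL : ℝ) : ℝ :=
  lh*lk + 12*lf*lg + 16*p*lp*lg - 2*k*lk*lL + 2*k^2*lh*lk - 2*k^3*lk*lL + k^4*lh*lk + 2*h*lh*lL - 4*h*k*lL^2 + 2*h*k^2*lh*lL + 2*h^2*lh*lk - 2*h^2*k*lk*lL + 2*h^2*k^2*lh*lk + 2*h^3*lh*lL + h^4*lh*lk + 12*g*lg^2 + 8*g*lf^2 + 8*g*p*lp*lf + 2*g*k*lf*lk + 2*g*k^3*lf*lk - 2*g*h*lf*lh + 8*g*h*k*lf*lL - 2*g*h*k^2*lf*lh + 2*g*h^2*k*lf*lk - 2*g*h^3*lf*lh + 4*g^2*lf*lg - 4*g^2*h*k*lf^2 + 16*f*lf*lg + 8*f*p*lp*lg - 2*f*k*lg*lk - 2*f*k^3*lg*lk + 2*f*h*lg*lh - 8*f*h*k*lg*lL + 2*f*h*k^2*lg*lh - 2*f*h^2*k*lg*lk + 2*f*h^3*lg*lh + 8*f*g*lg^2 + 8*f*g*lf^2 + 8*f*g*h*k*lf*lg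 + 4*f^2*lf*lg - 4*f^2*h*k*lg^2

noncomputable def dsw1 (f g : ℝ) : ℝ :=
  4*g + 4*f*g

noncomputable def esw2 (f g h k p lp lf lg lh lk lL : ℝ) : ℝ :=
  lk^2 - (1/4)*lh^2 + 15*lg^2 + 8*p*lp*lf + 12*p^2*lp^2 + k*lh*lL - k^2*lL^2 + 2*k^2*lk^2 - (1/2)*k^2*lh^2 + k^3*lh*lL + k^4*lk^2 - (1/4)*k^4*lh^2 + 4*h*lk*lL + 4*h*k^2*lk*lL + 4*h^2*lL^2 + 2*h^2*lk^2 - (1/2)*h^2*lh^2 + h^2*k*lh*lL + 2*h^2*k^2*lk^2 - (1/2)*h^2*k^2*lh^2 + 4*h^3*lk*lL + h^4*lk^2 - (1/4)*h^4*lh^2 + 20*g*lf*lg + 28*g*p*lp*lg - g*k*lf*lh + 2*g*k^2*lf*lL - g*k^3*lf*lh - 4*g*h*lf*lk - 4*g*h*k^2*lf*lk - 8*g*h^2*lf*lL - g*h^2*k*lf*lh - 4*g*h^3*lf*lk + 15*g^2*lg^2 + 4*g^2*lf^2 - g^2*k^2*lf^2 + 4*g^2*h^2*lf^2 + 10*f*lg^2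 + 8*f*p*lp*lf + f*k*lg*lh - 2*f*k^2*lg*lL + f*k^3*lg*lh + 4*f*h*lg*lk + 4*f*h*k^2*lg*lk + 8*f*h^2*lg*lL + f*h^2*k*lg*lh + 4*f*h^3*lg*lk + 12*f*g*lf*lg + 2*f*g*k^2*lf*lg - 8*f*g*h^2*lf*lg - f^2*lg^2 - f^2*k^2*lg^2 + 4*f^2*h^2*lg^2

noncomputable def dsw2 (f g : ℝ) : ℝ :=
  3 + 4*g^2 + 2*f - f^2

noncomputable def esw3 (f g h k p lp lf lg lh lk lL : ℝ) : ℝ :=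
  32*p*lp*lg + 40*g*lg^2

noncomputable def dsw3 (f g : ℝ) : ℝ :=
  8*g

noncomputable def esw4 (f g h k p lp lf lg lh lk lL : ℝ) : ℝ :=
  lk^2 - (1/4)*lh^2 + 15*lg^2 - 8*p*lp*lf + 12*p^2*lp^2 + k*lh*lL - k^2*lL^2 + 2*k^2*lk^2 - (1/2)*k^2*lh^2 + k^3*lh*lL + k^4*lk^2 - (1/4)*k^4*lh^2 + 4*h*lk*lL + 4*h*k^2*lk*lL + 4*h^2*lL^2 + 2*h^2*lk^2 - (1/2)*h^2*lh^2 + h^2*k*lh*lL + 2*h^2*k^2*lk^2 - (1/2)*h^2*k^2*lh^2 + 4*h^3*lk*lL + h^4*lk^2 - (1/4)*h^4*lh^2 - 20*g*lf*lg + 28*g*p*lp*lg - g*k*lf*lh + 2*g*k^2*lf*lL - g*k^3*lf*lh - 4*g*h*lf*lk - 4*g*h*k^2*lf*lk - 8*g*h^2*lf*lL - g*h^2*k*lf*lh - 4*g*h^3*lf*lk + 15*g^2*lg^2 + 4*g^2*lf^2 - g^2*k^2*lf^2 + 4*g^2*h^2*lf^2 - 10*f*lg^2 + 8*f*p*lp*lf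 + f*k*lg*lh - 2*f*k^2*lg*lL + f*k^3*lg*lh + 4*f*h*lg*lk + 4*f*h*k^2*lg*lk + 8*f*h^2*lg*lL + f*h^2*k*lg*lh + 4*f*h^3*lg*lk + 12*f*g*lf*lg + 2*f*g*k^2*lf*lg - 8*f*g*h^2*lf*lg - f^2*lg^2 - f^2*k^2*lg^2 + 4*f^2*h^2*lg^2

noncomputable def dsw4 (f g : ℝ) : ℝ :=
  3 + 4*g^2 - 2*f - f^2

noncomputable def esw5 (f g h k p lp lf lg lh lk lL : ℝ) : ℝ :=
  -lh*lk - 12*lf*lg + 16*p*lp*lg + 2*k*lk*lL - 2*k^2*lh*lk + 2*k^3*lk*lL - k^4*lh*lk - 2*h*lh*lL + 4*h*k*lL^2 - 2*h*k^2*lh*lL - 2*h^2*lh*lk + 2*h^2*k*lk*lL - 2*h^2*k^2*lh*lk - 2*h^3*lh*lL - h^4*lh*lk + 12*g*lg^2 + 8*g*lf^2 - 8*g*p*lp*lf - 2*g*k*lf*lk - 2*g*k^3*lf*lk + 2*g*h*lf*lh - 8*g*h*k*lf*lL + 2*g*h*k^2*lf*lh - 2*g*h^2*k*lf*lk + 2*g*h^3*lf*lh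 - 4*g^2*lf*lg + 4*g^2*h*k*lf^2 + 16*f*lf*lg - 8*f*p*lp*lg + 2*f*k*lg*lk + 2*f*k^3*lg*lk - 2*f*h*lg*lh + 8*f*h*k*lg*lL - 2*f*h*k^2*lg*lh + 2*f*h^2*k*lg*lk - 2*f*h^3*lg*lh - 8*f*g*lg^2 - 8*f*g*lf^2 - 8*f*g*h*k*lf*lg - 4*f^2*lf*lg + 4*f^2*h*k*lg^2

noncomputable def dsw5 (f g : ℝ) : ℝ :=
  4*g - 4*f*g

noncomputable def esw6 (f g h k p lp lf lg lh lk lL : ℝ) : ℝ :=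
  (1/4)*lh^2 + lg^2 + 4*lf^2 - 8*p*lp*lf + 4*p^2*lp^2 - k*lh*lL + k^2*lL^2 + (1/2)*k^2*lh^2 - k^3*lh*lL + (1/4)*k^4*lh^2 + (1/2)*h^2*lh^2 - h^2*k*lh*lL + (1/2)*h^2*k^2*lh^2 + (1/4)*h^4*lh^2 - 4*g*lf*lg + 4*g*p*lp*lg + g*k*lf*lh - 2*g*k^2*lf*lL + g*k^3*lf*lh + g*h^2*k*lf*lh + g^2*lg^2 + g^2*k^2*lf^2 - 2*f*lg^2 - 8*f*lf^2 + 8*f*p*lp*lf - f*k*lg*lh + 2*f*k^2*lg*lL - f*k^3*lg*lh - f*h^2*k*lg*lh + 4*f*g*lf*lg - 2*f*g*k^2*lf*lg + f^2*lg^2 + 4*f^2*lf^2 + f^2*k^2*lg^2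

noncomputable def dsw6 (f g : ℝ) : ℝ :=
  1 - 2*f + f^2

open Polynomial in
noncomputable def swP (p μ f g h k lp lf lg lh lk lL lm m c : ℝ) : Polynomial ℝ :=
  C (c^2*p/μ * esw0 f g h k p lp lf lg lh lk lL - m^2*(1-lm)^2 * dsw0 f g)
  + C (c^2*p/μ * esw1 f g h k p lp lf lg lh lk lL - m^2*(1-lm)^2 * dsw1 f g) * X
  + C (c^2*p/μ * esw2 f g h k p lp lf lg lh lk lL - m^2*(1-lm)^2 * dsw2 f g) * X^2
  + C (c^2*p/μ * esw3 f g h k p lp lf lg lh lk lL - m^2*(1-lm)^2 * dsw3 f g) * X^3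
  + C (c^2*p/μ * esw4 f g h k p lp lf lg lh lk lL - m^2*(1-lm)^2 * dsw4 f g) * X^4
  + C (c^2*p/μ * esw5 f g h k p lp lf lg lh lk lL - m^2*(1-lm)^2 * dsw5 f g) * X^5
  + C (c^2*p/μ * esw6 f g h k p lp lf lg lh lk lL - m^2*(1-lm)^2 * dsw6 f g) * X^6

lemma swP_natDegree_le (p μ f g h k lp lf lg lh lk lL lm m c : ℝ) :
    (swP p μ f g h k lp lf lg lh lk lL lm m c).natDegree ≤ 6 := by
  unfold swP
  compute_degree

set_option maxHeartbeats 1000000 in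
lemma swP_eval (p μ f g h k lp lf lg lh lk lL lm m c t A B Cq D : ℝ)
    (hD : D = (1+f) + 2*g*t + (1-f)*t^2)
    (hA : A = lg*t^2 + 2*lf*t - lg)
    (hB : B = 2*p*lp*(1+t^2)^2 + lf*((D + 1 + t^2)*(1-t^2) + f*(1+t^2)^2)
        + lg*((D + 1 + t^2)*(2*t) + g*(1+t^2)^2))
    (hC : Cq = (lL + f*lg - g*lf)*(k*t^2 + 2*h*t - k)
        + ((1+h^2+k^2)/2)*(-(lh*t^2) + 2*lk*t + lh)) :
    (swP p μ f g h k lp lf lg lh lk lL lm m c).eval t * (1 + t^2)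
      = c^2*(p/μ)*(A^2*D^2 + B^2 + Cq^2*(1+t^2)^2)
        - m^2*(1-lm)^2*D^2*(1+t^2)^2 := by
  subst hA hB hC hD
  simp only [swP, esw0, esw1, esw2, esw3, esw4, esw5, esw6,
    dsw0, dsw1, dsw2, dsw3, dsw4, dsw5, dsw6,
    Polynomial.eval_add, Polynomial.eval_mul, Polynomial.eval_pow,
    Polynomial.eval_C, Polynomial.eval_X]
  ring

lemma tan_half_aux {L : ℝ} (hL : L ∈ Set.Ioo (-Real.pi) Real.pi) :
    Real.cos L = (1 - Real.tan (L/2)^2) / (1 + Real.tan (L/2)^2) ∧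
    Real.sin L = 2 * Real.tan (L/2) / (1 + Real.tan (L/2)^2) := by
  obtain ⟨h1, h2⟩ := hL
  have hcu : 0 < Real.cos (L/2) := by
    apply Real.cos_pos_of_mem_Ioo
    constructor <;> [linarith; linarith]
  have hcu' : Real.cos (L/2) ≠ 0 := ne_of_gt hcu
  have hpy : Real.sin (L/2)^2 + Real.cos (L/2)^2 = 1 := Real.sin_sq_add_cos_sq (L/2)
  have h2L : (2:ℝ) * (L/2) = L := by ring
  have hcL : Real.cos L = Real.cos (L/2)^2 - Real.sin (L/2)^2 := by
    have := Real.cos_two_mul (L/2)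
    rw [h2L] at this
    linarith
  have hsL : Real.sin L = 2 * Real.sin (L/2) * Real.cos (L/2) := by
    have := Real.sin_two_mul (L/2)
    rw [h2L] at this
    linarith
  rw [Real.tan_eq_sin_div_cos, hcL, hsL]
  constructor
  all_goals field_simp
  all_goals nlinarith [hpy, (by rw [hpy] : Real.sin (L/2) * (Real.sin (L/2)^2 + Real.cos (L/2)^2) = Real.sin (L/2) * 1)]

lemma wfun_pos {f g : ℝ} (hfg : f ^ 2 + g ^ 2 < 1) (L : ℝ) : 0 < wfun f g L := by
  unfold wfun
  nlinarith [Real.sin_sq_add_cos_sq L, sq_nonneg (f * Real.sin L - g * Real.cos L),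
    sq_nonneg (1 + f * Real.cos L + g * Real.sin L)]

lemma Dq_pos {f g : ℝ} (hfg : f ^ 2 + g ^ 2 < 1) {L : ℝ}
    (hL : L ∈ Set.Ioo (-Real.pi) Real.pi) :
    0 < (1+f) + 2*g*Real.tan (L/2) + (1-f)*Real.tan (L/2)^2 := by
  obtain ⟨hc, hs⟩ := tan_half_aux hL
  have hw := wfun_pos hfg L
  have hU : (0:ℝ) < 1 + Real.tan (L/2)^2 := by positivity
  have hkey : (1+f) + 2*g*Real.tan (L/2) + (1-f)*Real.tan (L/2)^2
      = wfun f g L * (1 + Real.tan (L/2)^2) := by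
    unfold wfun
    rw [hc, hs]
    field_simp
    ring
  rw [hkey]
  positivity

set_option maxHeartbeats 1000000 in
lemma G_mul (p μ f g h k lp lf lg lh lk lL lm m c : ℝ)
    (hp : 0 < p) (hμ : 0 < μ) (hfg : f ^ 2 + g ^ 2 < 1) {L : ℝ}
    (hL : L ∈ Set.Ioo (-Real.pi) Real.pi) :
    Gfun p μ f g h k lp lf lg lh lk lL lm m c L
        * ((1+f) + 2*g*Real.tan (L/2) + (1-f)*Real.tan (L/2)^2)^2
        * (1 + Real.tan (L/2)^2)^2
      = (swP p μ f g h k lp lf lg lh lk lL lm m c).eval (Real.tan (L/2))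
        * (1 + Real.tan (L/2)^2) := by
  obtain ⟨hcos, hsin⟩ := tan_half_aux hL
  have hw := ne_of_gt (wfun_pos hfg L)
  set t := Real.tan (L/2) with ht
  have hU : (1:ℝ) + t^2 ≠ 0 := by positivity
  have hμ' : μ ≠ 0 := ne_of_gt hμ
  have hpμ : (0:ℝ) ≤ p / μ := le_of_lt (div_pos hp hμ)
  have hw2 : 1 + f * ((1 - t^2) / (1 + t^2)) + g * (2 * t / (1 + t^2)) ≠ 0 := by
    unfold wfun at hw
    rw [hcos, hsin] at hw
    exact hw
  set D := (1+f) + 2*g*t + (1-f)*t^2 with hD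
  have hDpos : 0 < D := by
    rw [hD]
    exact Dq_pos hfg hL
  have hD0 : D ≠ 0 := ne_of_gt hDpos
  have hweq : wfun f g L = D / (1 + t^2) := by
    unfold wfun
    rw [hcos, hsin, hD]
    field_simp
    ring
  set A := lg*t^2 + 2*lf*t - lg with hA
  set B := 2*p*lp*(1+t^2)^2 + lf*((D + 1 + t^2)*(1-t^2) + f*(1+t^2)^2)
      + lg*((D + 1 + t^2)*(2*t) + g*(1+t^2)^2) with hB
  set Cq := (lL + f*lg - g*lf)*(k*t^2 + 2*h*t - k)
      + ((1+h^2+k^2)/2)*(-(lh*t^2) + 2*lk*t + lh) with hC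
  have hR : Rfun p μ lf lg L * (1 + t^2) = Real.sqrt (p/μ) * A := by
    rw [hA]
    unfold Rfun
    rw [hcos, hsin]
    generalize hq : Real.sqrt (p/μ) = q
    have hq0 : q ≠ 0 := by
      rw [← hq]
      exact ne_of_gt (Real.sqrt_pos.mpr (div_pos hp hμ))
    field_simp [hq0, hD0]
    all_goals ring
  have hT : Tfun p μ f g lp lf lg L * (D * (1 + t^2)) = Real.sqrt (p/μ) * B := by
    rw [hB]
    unfold Tfun
    rw [hweq, hcos, hsin]
    generalize hq : Real.sqrt (p/μ) = q
    have hq0 : q ≠ 0 := by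
      rw [← hq]
      exact ne_of_gt (Real.sqrt_pos.mpr (div_pos hp hμ))
    field_simp [hq0, hD0]
    all_goals ring
  have hN : Nfun p μ f g h k lf lg lh lk lL L * D = Real.sqrt (p/μ) * Cq := by
    rw [hC]
    unfold Nfun
    rw [hweq, hcos, hsin]
    generalize hq : Real.sqrt (p/μ) = q
    have hq0 : q ≠ 0 := by
      rw [← hq]
      exact ne_of_gt (Real.sqrt_pos.mpr (div_pos hp hμ))
    field_simp [hq0, hD0]
    all_goals ring
  have hsq : Real.sqrt (p/μ) ^ 2 = p/μ := Real.sq_sqrt hpμ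
  calc Gfun p μ f g h k lp lf lg lh lk lL lm m c L * D^2 * (1 + t^2)^2
      = c^2*((Rfun p μ lf lg L * (1 + t^2))^2 * D^2
          + (Tfun p μ f g lp lf lg L * (D * (1 + t^2)))^2
          + (Nfun p μ f g h k lf lg lh lk lL L * D)^2 * (1 + t^2)^2)
        - m^2*(1-lm)^2*D^2*(1+t^2)^2 := by
        unfold Gfun; ring
    _ = c^2*(p/μ)*(A^2*D^2 + B^2 + Cq^2*(1+t^2)^2)
        - m^2*(1-lm)^2*D^2*(1+t^2)^2 := by
        rw [hR, hT, hN]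
        simp only [mul_pow, hsq]
        ring
    _ = (swP p μ f g h k lp lf lg lh lk lL lm m c).eval t * (1 + t^2) :=
        (swP_eval p μ f g h k lp lf lg lh lk lL lm m c t A B Cq D hD hA hB hC).symm


/-- There exists a real polynomial `P` of degree at most 6 (the
switching polynomial) such that on `(-π, π)`: (i) `G(L) = 0 ↔ P(tan(L/2)) = 0`;
(ii) `P = 0` only if `G` vanishes identically on `(-π, π)`; and (iii) if
`λ_m ≤ 1`, then `S(L) = 0 ↔ P(tan(L/2)) = 0`. -/
theorem exists_switching_polynomial
    (p μ f g h k lp lf lg lh lk lL lm m c : ℝ)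
    (hp : 0 < p) (hμ : 0 < μ) (hfg : f ^ 2 + g ^ 2 < 1) (hm : 0 < m) (hc : 0 < c) :
    ∃ P : Polynomial ℝ, P.natDegree ≤ 6 ∧
      (∀ L ∈ Set.Ioo (-Real.pi) Real.pi,
        Gfun p μ f g h k lp lf lg lh lk lL lm m c L = 0 ↔
          P.eval (Real.tan (L / 2)) = 0) ∧
      (P = 0 → ∀ L ∈ Set.Ioo (-Real.pi) Real.pi,
        Gfun p μ f g h k lp lf lg lh lk lL lm m c L = 0) ∧
      (lm ≤ 1 → ∀ L ∈ Set.Ioo (-Real.pi) Real.pi,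
        Sfun p μ f g h k lp lf lg lh lk lL lm m c L = 0 ↔
          P.eval (Real.tan (L / 2)) = 0) := by
  have hiff : ∀ L ∈ Set.Ioo (-Real.pi) Real.pi,
      Gfun p μ f g h k lp lf lg lh lk lL lm m c L = 0 ↔
        (swP p μ f g h k lp lf lg lh lk lL lm m c).eval (Real.tan (L/2)) = 0 := by
    intro L hL
    have key := G_mul p μ f g h k lp lf lg lh lk lL lm m c hp hμ hfg hL
    have hD := Dq_pos hfg hL
    have hU : (0:ℝ) < 1 + Real.tan (L/2)^2 := by positivity
    constructor
    · intro hG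
      have h0 : (swP p μ f g h k lp lf lg lh lk lL lm m c).eval (Real.tan (L/2))
          * (1 + Real.tan (L/2)^2) = 0 := by
        rw [← key, hG]; ring
      exact (mul_eq_zero.mp h0).resolve_right (by positivity)
    · intro hP
      rw [hP, zero_mul] at key
      rcases mul_eq_zero.mp key with h1 | h1
      · rcases mul_eq_zero.mp h1 with h2 | h2
        · exact h2
        · exact absurd h2 (by positivity)
      · exact absurd h1 (by positivity)
  refine ⟨swP p μ f g h k lp lf lg lh lk lL lm m c,
    swP_natDegree_le p μ f g h k lp lf lg lh lk lL lm m c, hiff, ?_, ?_⟩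
  · intro hP0 L hL
    exact (hiff L hL).mpr (by rw [hP0]; simp)
  · intro hlm L hL
    rw [← hiff L hL]
    unfold Sfun Gfun
    set Xv := Rfun p μ lf lg L ^ 2 + Tfun p μ f g lp lf lg L ^ 2
      + Nfun p μ f g h k lf lg lh lk lL L ^ 2 with hX
    have hXnn : 0 ≤ Xv := by positivity
    have hsn : 0 ≤ Real.sqrt Xv := Real.sqrt_nonneg _
    have hsq : Real.sqrt Xv ^ 2 = Xv := Real.sq_sqrt hXnn
    have hm' : m ≠ 0 := ne_of_gt hm
    constructor
    · intro hS
      have h2 : c * Real.sqrt Xv = m * (1 - lm) := by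
        field_simp at hS
        linarith
      linear_combination (c*Real.sqrt Xv + m*(1-lm))*h2 - c^2*hsq
    · intro hG
      have hfac : (c*Real.sqrt Xv - m*(1-lm)) * (c*Real.sqrt Xv + m*(1-lm)) = 0 := by
        linear_combination hG + c^2*hsq
      have hb : 0 ≤ m*(1-lm) := mul_nonneg (le_of_lt hm) (by linarith)
      have ha : 0 ≤ c*Real.sqrt Xv := mul_nonneg (le_of_lt hc) hsn
      have h2 : c*Real.sqrt Xv = m*(1-lm) := by
        rcases mul_eq_zero.mp hfac with h1 | h1
        · linarith
        · linarith
      field_simp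
      linarith [h2]
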